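/- Let k be an algebraically closed field of characteristic ≠ 2, with i a square root of −1. The subgroup of PGL(2,k) generated by the classes of [[1,0],[0,-1]], [[0,1],[1,0]], and [[1,i],[1,-i]] is isomorphic to the alternating group A₄ of order 12. -/

import Mathlib

open scoped LinearAlgebra.Projectivization
open Matrix Projectivization

noncomputable section

/-- The projective general linear group `PGL(2,k)`: `GL(2,k)` modulo its center. -/
abbrev PGL2 (k : Type) [Field k] : Type := GL (Fin 2) k ⧸ Subgroup.center (GL (Fin 2) k)

variable {k : Type} [Field k]

open scoped Classical in
/-- The class in `PGL(2,k)` of a nonsingular 2×2 matrix (junk value `1` if singular). -/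
def pgl (M : Matrix (Fin 2) (Fin 2) k) : PGL2 k :=
  if h : M.det ≠ 0 then QuotientGroup.mk (Matrix.GeneralLinearGroup.mkOfDetNeZero M h)
  else 1

/-- The projective line `P¹(k)`. -/
abbrev P1 (k : Type) [Field k] := ℙ k (Fin 2 → k)

/-- The linear automorphism of `k²` given by a matrix in `GL(2,k)`. -/
def glLinEquiv (g : GL (Fin 2) k) : (Fin 2 → k) ≃ₗ[k] (Fin 2 → k) :=
  LinearMap.GeneralLinearGroup.generalLinearEquiv k (Fin 2 → k)
    (Matrix.GeneralLinearGroup.toLin g)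

lemma glLinEquiv_apply (g : GL (Fin 2) k) (v : Fin 2 → k) :
    glLinEquiv g v = Matrix.mulVecLin g.val v := rfl

/-- `GL(2,k)` acts on `P¹(k)` by fractional linear transformations. -/
instance glAction : MulAction (GL (Fin 2) k) (P1 k) where
  smul g x := x.map (glLinEquiv g).toLinearMap (glLinEquiv g).injective
  one_smul x := by
    show Projectivization.map _ _ x = x
    have h1 : glLinEquiv (1 : GL (Fin 2) k) = LinearEquiv.refl k _ := by
      simp only [glLinEquiv, _root_.map_one]; rfl
    induction' x using Projectivization.ind with v hv
    rw [Projectivization.map_mk]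
    simp [h1]
  mul_smul g h x := by
    show Projectivization.map _ _ x =
      Projectivization.map _ _ (Projectivization.map _ _ x)
    have hgh : glLinEquiv (g * h) = (glLinEquiv h).trans (glLinEquiv g) := by
      simp only [glLinEquiv, _root_.map_mul]; rfl
    induction' x using Projectivization.ind with v hv
    simp only [Projectivization.map_mk, hgh]
    rfl

lemma gl_smul_mk (g : GL (Fin 2) k) (v : Fin 2 → k) (hv : v ≠ 0) :
    g • Projectivization.mk k v hv =
      Projectivization.mk k (glLinEquiv g v) ((glLinEquiv g).map_ne_zero_iff.mpr hv) :=
  rfl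

/-- Central (i.e. scalar) matrices act trivially on `P¹(k)`. -/
lemma central_smul_triv (c : GL (Fin 2) k) (hc : c ∈ Subgroup.center (GL (Fin 2) k))
    (x : P1 k) : c • x = x := by
  obtain ⟨r, hr⟩ : c.val ∈ Set.range (Matrix.scalar (Fin 2)) := by
    refine Matrix.mem_range_scalar_of_commute_transvectionStruct (fun t => ?_)
    have htGL : (Matrix.GeneralLinearGroup.mkOfDetNeZero t.toMatrix
        (by rw [t.det]; exact one_ne_zero) : GL (Fin 2) k) * c =
        c * Matrix.GeneralLinearGroup.mkOfDetNeZero t.toMatrix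
        (by rw [t.det]; exact one_ne_zero) :=
      (Subgroup.mem_center_iff.mp hc) _
    exact congrArg Units.val htGL
  have hr0 : r ≠ 0 := by
    rintro rfl
    have hu : IsUnit c.val.det := (Matrix.isUnit_iff_isUnit_det _).mp c.isUnit
    rw [← hr] at hu
    simp at hu
  induction' x using Projectivization.ind with v hv
  rw [gl_smul_mk]
  apply (Projectivization.mk_eq_mk_iff' k _ _ _ hv).mpr
  refine ⟨r, ?_⟩
  rw [glLinEquiv_apply, ← hr]
  funext j
  simp [Matrix.mulVec_diagonal]

/-- The action of `GL(2,k)` on `P¹(k)` descends to `PGL(2,k)`. -/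
instance pglAction : MulAction (PGL2 k) (P1 k) where
  smul g x := Quotient.liftOn' g (fun A => A • x) (by
    intro a b hab
    rw [QuotientGroup.leftRel_apply] at hab
    have : b = a * (a⁻¹ * b) := by group
    show a • x = b • x
    rw [this, SemigroupAction.mul_smul, central_smul_triv _ hab])
  one_smul x := by
    show (1 : GL (Fin 2) k) • x = x
    exact MulAction.one_smul x
  mul_smul a b x := by
    refine Quotient.inductionOn₂' a b (fun A B => ?_)
    show (A * B) • x = A • (B • x)
    exact SemigroupAction.mul_smul A B x

/-- The point `(a : 1)` of `P¹(k)`. -/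
def pt (a : k) : P1 k := Projectivization.mk k ![a, 1] (by
  intro h; simpa using congrFun h 1)

/-- The point at infinity `(1 : 0)` of `P¹(k)`. -/
def inftyPt : P1 k := Projectivization.mk k ![1, 0] (by
  intro h; simpa using congrFun h 0)


lemma vne2 (x y : k) (h : y ≠ 0) : (![x, y] : Fin 2 → k) ≠ 0 := fun hh => h (by simpa using congrFun hh 1)

lemma vne2' (x y : k) (h : x ≠ 0) : (![x, y] : Fin 2 → k) ≠ 0 := fun hh => h (by simpa using congrFun hh 0)

lemma mulVec2 (a b c d x y : k) :
    Matrix.mulVec !![a, b; c, d] ![x, y] = ![a * x + b * y, c * x + d * y] := by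
  funext j; fin_cases j <;>
    simp [Matrix.mulVec, dotProduct, Fin.sum_univ_two]

lemma mk2_eq_mk2_iff (x y x' y' : k) (h : (![x, y] : Fin 2 → k) ≠ 0) (h' : (![x', y'] : Fin 2 → k) ≠ 0) :
    Projectivization.mk k ![x, y] h = Projectivization.mk k ![x', y'] h' ↔
      ∃ a : k, a * x' = x ∧ a * y' = y := by
  rw [Projectivization.mk_eq_mk_iff']
  constructor
  · rintro ⟨a, ha⟩
    exact ⟨a, by simpa using congrFun ha 0, by simpa using congrFun ha 1⟩
  · rintro ⟨a, h1, h2⟩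
    refine ⟨a, ?_⟩
    funext j; fin_cases j <;> simpa

lemma pgl_smul_mk' (M : Matrix (Fin 2) (Fin 2) k) (hM : M.det ≠ 0)
    (v : Fin 2 → k) (hv : v ≠ 0) (hv' : M.mulVec v ≠ 0) :
    pgl M • Projectivization.mk k v hv = Projectivization.mk k (M.mulVec v) hv' := by
  rw [pgl, dif_pos hM]
  show (Matrix.GeneralLinearGroup.mkOfDetNeZero M hM) • Projectivization.mk k v hv = _
  rw [gl_smul_mk]
  rfl

lemma pgl_smul_mk2 (a b c d x y : k) (hdet : a * d - b * c ≠ 0)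
    (h : (![x, y] : Fin 2 → k) ≠ 0) (h' : (![a * x + b * y, c * x + d * y] : Fin 2 → k) ≠ 0) :
    pgl !![a, b; c, d] • Projectivization.mk k ![x, y] h =
      Projectivization.mk k ![a * x + b * y, c * x + d * y] h' := by
  have hm : Matrix.mulVec !![a, b; c, d] ![x, y] = ![a * x + b * y, c * x + d * y] :=
    mulVec2 a b c d x y
  rw [pgl_smul_mk' _ (by rw [Matrix.det_fin_two_of]; exact hdet) _ h (by rw [hm]; exact h')]
  exact (Projectivization.mk_eq_mk_iff' k _ _ _ _).mpr ⟨1, by rw [one_smul, hm]⟩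

lemma eq_one_of_fix3 (h2 : (2 : k) ≠ 0) (v : k) (hv0 : v ≠ 0) (h1 : v ^ 2 ≠ 1) (hm1 : v ^ 2 ≠ -1)
    (hw0 : (![v, 1] : Fin 2 → k) ≠ 0) (hw1 : (![-v, 1] : Fin 2 → k) ≠ 0)
    (hw2 : (![1, v] : Fin 2 → k) ≠ 0)
    (g : PGL2 k)
    (f0 : g • Projectivization.mk k ![v, 1] hw0 = Projectivization.mk k ![v, 1] hw0)
    (f1 : g • Projectivization.mk k ![-v, 1] hw1 = Projectivization.mk k ![-v, 1] hw1)
    (f2 : g • Projectivization.mk k ![1, v] hw2 = Projectivization.mk k ![1, v] hw2) :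
    g = 1 := by
  obtain ⟨A, rfl⟩ := QuotientGroup.mk_surjective g
  have hact : ∀ (w : Fin 2 → k) (hw : w ≠ 0),
      (QuotientGroup.mk A : PGL2 k) • Projectivization.mk k w hw =
        Projectivization.mk k (Matrix.mulVec A.val w) (fun h => ((glLinEquiv A).map_ne_zero_iff.mpr hw) h) := by
    intro w hw
    show A • Projectivization.mk k w hw = _
    rw [gl_smul_mk]; rfl
  rw [hact _ hw0, Projectivization.mk_eq_mk_iff'] at f0
  rw [hact _ hw1, Projectivization.mk_eq_mk_iff'] at f1
  rw [hact _ hw2, Projectivization.mk_eq_mk_iff'] at f2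
  obtain ⟨l0, hl0⟩ := f0
  obtain ⟨l1, hl1⟩ := f1
  obtain ⟨l2, hl2⟩ := f2
  set a := A.val 0 0 with ha
  set b := A.val 0 1 with hb
  set c := A.val 1 0 with hc
  set d := A.val 1 1 with hd
  have hmv : ∀ (x y : k), Matrix.mulVec A.val ![x, y] = ![a * x + b * y, c * x + d * y] := by
    intro x y
    funext j; fin_cases j <;>
      simp [Matrix.mulVec, dotProduct, Fin.sum_univ_two, ha, hb, hc, hd]
  rw [hmv] at hl0 hl1 hl2
  have e1 : a * v + b = l0 * v := by simpa using (congrFun hl0 0).symm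
  have e2 : c * v + d = l0 * 1 := by simpa using (congrFun hl0 1).symm
  have e3 : a * -v + b * 1 = l1 * -v := by simpa using (congrFun hl1 0).symm
  have e4 : c * -v + d * 1 = l1 * 1 := by simpa using (congrFun hl1 1).symm
  have e5 : a * 1 + b * v = l2 * 1 := by simpa using (congrFun hl2 0).symm
  have e6 : c * 1 + d * v = l2 * v := by simpa using (congrFun hl2 1).symm
  have had : a = d := by
    have h' : 2 * ((a - d) * v) = 0 := by linear_combination e1 - e3 - v * e2 - v * e4
    rcases mul_eq_zero.mp h' with h'' | h''
    · exact absurd h'' h2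
    · rcases mul_eq_zero.mp h'' with h3 | h3
      · exact sub_eq_zero.mp h3
      · exact absurd h3 hv0
  have hbc : b = c * v ^ 2 := by
    have h' : 2 * (b - c * v ^ 2) = 0 := by linear_combination e1 + e3 - v * e2 + v * e4
    rcases mul_eq_zero.mp h' with h'' | h''
    · exact absurd h'' h2
    · exact sub_eq_zero.mp h''
  have hc0 : c = 0 := by
    have h' : c * ((v ^ 2 - 1) * (v ^ 2 + 1)) = 0 := by
      linear_combination v * e5 - e6 - v * had - v ^ 2 * hbc
    rcases mul_eq_zero.mp h' with h'' | h''
    · exact h''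
    · rcases mul_eq_zero.mp h'' with h3 | h3
      · exact absurd (sub_eq_zero.mp h3) h1
      · exact absurd (eq_neg_of_add_eq_zero_left h3) hm1
  have hb0 : b = 0 := by rw [hbc, hc0, zero_mul]
  have hA : A.val = a • (1 : Matrix (Fin 2) (Fin 2) k) := by
    ext i j
    fin_cases i <;> fin_cases j <;>
      simp [Matrix.one_apply, ← ha, ← hb, ← hc, ← hd, hb0, hc0, had]
  rw [QuotientGroup.eq_one_iff, Subgroup.mem_center_iff]
  intro g
  rw [Units.ext_iff, Units.val_mul, Units.val_mul, hA, mul_smul_comm, smul_mul_assoc,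
    mul_one, one_mul]

def sA : Equiv.Perm (Fin 4) := Equiv.swap 0 1 * Equiv.swap 2 3
def sB : Equiv.Perm (Fin 4) := Equiv.swap 0 2 * Equiv.swap 1 3
def sC : Equiv.Perm (Fin 4) := Equiv.swap 1 3 * Equiv.swap 1 2

lemma A4list : ∀ τ : Equiv.Perm (Fin 4), Equiv.Perm.sign τ = 1 →
    (τ = 1 ∨ τ = sA ∨ τ = sB ∨ τ = sA * sB ∨ τ = sC ∨ τ = sC * sC ∨ τ = sA * sC ∨
      τ = sB * sC ∨ τ = sA * sB * sC ∨ τ = sA * (sC * sC) ∨ τ = sB * (sC * sC) ∨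
      τ = sA * sB * (sC * sC)) := by decide

open Polynomial

/-- Let `k` be algebraically closed of characteristic ≠ 2 and `i` a square root
of `-1`. The subgroup of `PGL(2,k)` generated by the classes of `[[1,0],[0,-1]]`,
`[[0,1],[1,0]]` and `[[1,i],[1,-i]]` is isomorphic to the alternating group `A₄` of
order 12. -/
theorem stmt_8 (k : Type) [Field k] [IsAlgClosed k] (h2 : (2 : k) ≠ 0)
    (i : k) (hi : i^2 = -1)
    (G : Subgroup (PGL2 k))
    (hG : G = Subgroup.closure
      {pgl !![(1:k), 0; 0, -1], pgl !![(0:k), 1; 1, 0], pgl !![(1:k), i; 1, -i]}) :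
    Nonempty (G ≃* alternatingGroup (Fin 4)) ∧ Nat.card G = 12 := by
  subst hG
  obtain ⟨v, hv⟩ := IsAlgClosed.exists_root
    (C (1:k) * X ^ 2 + C (-(1+i)) * X + C (-i))
    (by rw [Polynomial.degree_quadratic one_ne_zero]; decide)
  have hvq : v ^ 2 = (1 + i) * v + i := by
    have := hv
    simp only [Polynomial.IsRoot, Polynomial.eval_add, Polynomial.eval_mul,
      Polynomial.eval_pow, Polynomial.eval_C, Polynomial.eval_X] at this
    linear_combination this
  have hi0 : i ≠ 0 := by
    intro h; rw [h] at hi; simp at hi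
  have h1i : (1 : k) + i ≠ 0 := by
    intro h
    have : i = -1 := by linear_combination h
    rw [this] at hi
    exact h2 (by linear_combination hi)
  have hv0 : v ≠ 0 := by
    intro h; rw [h] at hvq; simp at hvq
    exact hi0 hvq.symm
  have hsq1 : v ^ 2 ≠ 1 := by
    intro h
    have h' : (1 + i) * v = 1 - i := by linear_combination h - hvq
    have h'' : (4 : k) * i = 0 := by
      linear_combination ((1+i) * v + (1 - i)) * h' - (1+i)^2 * h
    rcases mul_eq_zero.mp h'' with h3 | h3
    · rcases mul_eq_zero.mp (show (2:k) * 2 = 0 by linear_combination h3) with h4 | h4 <;>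
        exact h2 h4
    · exact hi0 h3
  have hsqm1 : v ^ 2 ≠ -1 := by
    intro h
    have h' : (1 + i) * v = (1 + i) * (-1) := by linear_combination h - hvq
    have hv1 : v = -1 := mul_left_cancel₀ h1i h'
    rw [hv1] at h; simp at h
    exact h2 (by linear_combination h)
  -- the four points of the tetrahedron
  have n0 : (![v, 1] : Fin 2 → k) ≠ 0 := vne2 _ _ one_ne_zero
  have n1 : (![-v, 1] : Fin 2 → k) ≠ 0 := vne2 _ _ one_ne_zero
  have n2 : (![(1:k), v] : Fin 2 → k) ≠ 0 := vne2' _ _ one_ne_zero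
  have n3 : (![(1:k), -v] : Fin 2 → k) ≠ 0 := vne2' _ _ one_ne_zero
  obtain ⟨pts, hp0, hp1, hp2, hp3⟩ :
      ∃ pts : Fin 4 → P1 k, pts 0 = Projectivization.mk k ![v, 1] n0 ∧
        pts 1 = Projectivization.mk k ![-v, 1] n1 ∧
        pts 2 = Projectivization.mk k ![(1:k), v] n2 ∧
        pts 3 = Projectivization.mk k ![(1:k), -v] n3 :=
    ⟨![Projectivization.mk k ![v, 1] n0, Projectivization.mk k ![-v, 1] n1,
       Projectivization.mk k ![(1:k), v] n2, Projectivization.mk k ![(1:k), -v] n3],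
      rfl, rfl, rfl, rfl⟩
  -- pairwise distinctness
  have q01 : pts 0 ≠ pts 1 := by
    intro hcon
    rw [hp0, hp1, mk2_eq_mk2_iff] at hcon
    obtain ⟨a, ha1, ha2⟩ := hcon
    rw [mul_one] at ha2; subst ha2
    rcases mul_eq_zero.mp (show (2:k) * v = 0 by linear_combination -ha1) with h | h
    · exact h2 h
    · exact hv0 h
  have q02 : pts 0 ≠ pts 2 := by
    intro hcon
    rw [hp0, hp2, mk2_eq_mk2_iff] at hcon
    obtain ⟨a, ha1, ha2⟩ := hcon
    rw [mul_one] at ha1; subst ha1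
    exact hsq1 (by linear_combination ha2)
  have q03 : pts 0 ≠ pts 3 := by
    intro hcon
    rw [hp0, hp3, mk2_eq_mk2_iff] at hcon
    obtain ⟨a, ha1, ha2⟩ := hcon
    rw [mul_one] at ha1; subst ha1
    exact hsqm1 (by linear_combination -ha2)
  have q12 : pts 1 ≠ pts 2 := by
    intro hcon
    rw [hp1, hp2, mk2_eq_mk2_iff] at hcon
    obtain ⟨a, ha1, ha2⟩ := hcon
    rw [mul_one] at ha1; subst ha1
    exact hsqm1 (by linear_combination -ha2)
  have q13 : pts 1 ≠ pts 3 := by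
    intro hcon
    rw [hp1, hp3, mk2_eq_mk2_iff] at hcon
    obtain ⟨a, ha1, ha2⟩ := hcon
    rw [mul_one] at ha1; subst ha1
    exact hsq1 (by linear_combination ha2)
  have q23 : pts 2 ≠ pts 3 := by
    intro hcon
    rw [hp2, hp3, mk2_eq_mk2_iff] at hcon
    obtain ⟨a, ha1, ha2⟩ := hcon
    rw [mul_one] at ha1; subst ha1
    rcases mul_eq_zero.mp (show (2:k) * v = 0 by linear_combination -ha2) with h | h
    · exact h2 h
    · exact hv0 h
  have hpinj : Function.Injective pts := by
    intro j j' hjj'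
    fin_cases j <;> fin_cases j' <;>
      first
        | rfl
        | exact absurd hjj' q01 | exact absurd hjj'.symm q01
        | exact absurd hjj' q02 | exact absurd hjj'.symm q02
        | exact absurd hjj' q03 | exact absurd hjj'.symm q03
        | exact absurd hjj' q12 | exact absurd hjj'.symm q12
        | exact absurd hjj' q13 | exact absurd hjj'.symm q13
        | exact absurd hjj' q23 | exact absurd hjj'.symm q23
  -- generator computations
  have hA0 : pgl !![(1:k), 0; 0, -1] • pts 0 = pts 1 := by
    rw [hp0, hp1, pgl_smul_mk2 _ _ _ _ _ _ (by norm_num) n0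
      (vne2 _ _ (by intro h; exact one_ne_zero (by linear_combination -h))), mk2_eq_mk2_iff]
    exact ⟨-1, by ring, by ring⟩
  have hA1 : pgl !![(1:k), 0; 0, -1] • pts 1 = pts 0 := by
    rw [hp1, hp0, pgl_smul_mk2 _ _ _ _ _ _ (by norm_num) n1
      (vne2 _ _ (by intro h; exact one_ne_zero (by linear_combination -h))), mk2_eq_mk2_iff]
    exact ⟨-1, by ring, by ring⟩
  have hA2 : pgl !![(1:k), 0; 0, -1] • pts 2 = pts 3 := by
    rw [hp2, hp3, pgl_smul_mk2 _ _ _ _ _ _ (by norm_num) n2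
      (vne2 _ _ (by intro h; exact hv0 (by linear_combination -h))), mk2_eq_mk2_iff]
    exact ⟨1, by ring, by ring⟩
  have hA3 : pgl !![(1:k), 0; 0, -1] • pts 3 = pts 2 := by
    rw [hp3, hp2, pgl_smul_mk2 _ _ _ _ _ _ (by norm_num) n3
      (vne2 _ _ (by intro h; exact hv0 (by linear_combination h))), mk2_eq_mk2_iff]
    exact ⟨1, by ring, by ring⟩
  have hB0 : pgl !![(0:k), 1; 1, 0] • pts 0 = pts 2 := by
    rw [hp0, hp2, pgl_smul_mk2 _ _ _ _ _ _ (by norm_num) n0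
      (vne2 _ _ (by intro h; exact hv0 (by linear_combination h))), mk2_eq_mk2_iff]
    exact ⟨1, by ring, by ring⟩
  have hB1 : pgl !![(0:k), 1; 1, 0] • pts 1 = pts 3 := by
    rw [hp1, hp3, pgl_smul_mk2 _ _ _ _ _ _ (by norm_num) n1
      (vne2 _ _ (by intro h; exact hv0 (by linear_combination -h))), mk2_eq_mk2_iff]
    exact ⟨1, by ring, by ring⟩
  have hB2 : pgl !![(0:k), 1; 1, 0] • pts 2 = pts 0 := by
    rw [hp2, hp0, pgl_smul_mk2 _ _ _ _ _ _ (by norm_num) n2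
      (vne2 _ _ (by intro h; exact one_ne_zero (by linear_combination h))), mk2_eq_mk2_iff]
    exact ⟨1, by ring, by ring⟩
  have hB3 : pgl !![(0:k), 1; 1, 0] • pts 3 = pts 1 := by
    rw [hp3, hp1, pgl_smul_mk2 _ _ _ _ _ _ (by norm_num) n3
      (vne2 _ _ (by intro h; exact one_ne_zero (by linear_combination h))), mk2_eq_mk2_iff]
    exact ⟨1, by ring, by ring⟩
  have hnC0 : (![1 * v + i * 1, 1 * v + -i * 1] : Fin 2 → k) ≠ 0 := by
    apply vne2
    intro h; apply hsqm1
    have hvi : v = i := by linear_combination h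
    rw [hvi]; exact hi
  have hnC1 : (![1 * -v + i * 1, 1 * -v + -i * 1] : Fin 2 → k) ≠ 0 := by
    apply vne2
    intro h; apply hsqm1
    have hvi : v = -i := by linear_combination -h
    rw [hvi]; linear_combination hi
  have hnC2 : (![1 * 1 + i * v, 1 * 1 + -i * v] : Fin 2 → k) ≠ 0 := by
    apply vne2'
    intro h; apply hsqm1
    have hvi : v = i := by linear_combination -i*h + v*hi
    rw [hvi]; exact hi
  have hnC3 : (![1 * 1 + i * -v, 1 * 1 + -i * -v] : Fin 2 → k) ≠ 0 := by
    apply vne2'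
    intro h; apply hsqm1
    have hvi : v = -i := by linear_combination i*h + v*hi
    rw [hvi]; linear_combination hi
  have hdetC : (1:k) * -i - i * 1 ≠ 0 := by
    intro h
    rcases mul_eq_zero.mp (show (-2) * i = (0:k) by linear_combination h) with h' | h'
    · exact h2 (by linear_combination -h')
    · exact hi0 h'
  have hC0 : pgl !![(1:k), i; 1, -i] • pts 0 = pts 0 := by
    rw [hp0, pgl_smul_mk2 _ _ _ _ _ _ hdetC n0 hnC0, mk2_eq_mk2_iff]
    exact ⟨v - i, by linear_combination hvq, by ring⟩
  have hC1 : pgl !![(1:k), i; 1, -i] • pts 1 = pts 2 := by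
    rw [hp1, hp2, pgl_smul_mk2 _ _ _ _ _ _ hdetC n1 hnC1, mk2_eq_mk2_iff]
    exact ⟨i - v, by ring, by linear_combination -hvq⟩
  have hC2 : pgl !![(1:k), i; 1, -i] • pts 2 = pts 3 := by
    rw [hp2, hp3, pgl_smul_mk2 _ _ _ _ _ _ hdetC n2 hnC2, mk2_eq_mk2_iff]
    exact ⟨1 + i * v, by ring, by linear_combination -i*hvq - (v+1)*hi⟩
  have hC3 : pgl !![(1:k), i; 1, -i] • pts 3 = pts 1 := by
    rw [hp3, hp1, pgl_smul_mk2 _ _ _ _ _ _ hdetC n3 hnC3, mk2_eq_mk2_iff]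
    exact ⟨1 + i * v, by linear_combination -i*hvq - (v+1)*hi, by ring⟩
  -- membership of generators
  have memA : pgl !![(1:k), 0; 0, -1] ∈ Subgroup.closure
      {pgl !![(1:k), 0; 0, -1], pgl !![(0:k), 1; 1, 0], pgl !![(1:k), i; 1, -i]} :=
    Subgroup.subset_closure (Set.mem_insert _ _)
  have memB : pgl !![(0:k), 1; 1, 0] ∈ Subgroup.closure
      {pgl !![(1:k), 0; 0, -1], pgl !![(0:k), 1; 1, 0], pgl !![(1:k), i; 1, -i]} :=
    Subgroup.subset_closure (Set.mem_insert_of_mem _ (Set.mem_insert _ _))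
  have memC : pgl !![(1:k), i; 1, -i] ∈ Subgroup.closure
      {pgl !![(1:k), 0; 0, -1], pgl !![(0:k), 1; 1, 0], pgl !![(1:k), i; 1, -i]} :=
    Subgroup.subset_closure
      (Set.mem_insert_of_mem _ (Set.mem_insert_of_mem _ (Set.mem_singleton _)))
  -- every element of the closure permutes the four points
  have hsmulp : ∀ g ∈ Subgroup.closure
      {pgl !![(1:k), 0; 0, -1], pgl !![(0:k), 1; 1, 0], pgl !![(1:k), i; 1, -i]},
      ∀ j : Fin 4, ∃ j', g • pts j = pts j' := by
    intro g hg
    refine Subgroup.closure_induction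
      (p := fun x _ => ∀ j : Fin 4, ∃ j', x • pts j = pts j') ?_ ?_ ?_ ?_ hg
    · intro x hx
      simp only [Set.mem_insert_iff, Set.mem_singleton_iff] at hx
      rcases hx with rfl | rfl | rfl
      · intro j; fin_cases j
        exacts [⟨1, hA0⟩, ⟨0, hA1⟩, ⟨3, hA2⟩, ⟨2, hA3⟩]
      · intro j; fin_cases j
        exacts [⟨2, hB0⟩, ⟨3, hB1⟩, ⟨0, hB2⟩, ⟨1, hB3⟩]
      · intro j; fin_cases j
        exacts [⟨0, hC0⟩, ⟨2, hC1⟩, ⟨3, hC2⟩, ⟨1, hC3⟩]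
    · intro j; exact ⟨j, one_smul _ _⟩
    · intro x y _ _ ihx ihy j
      obtain ⟨j1, hj1⟩ := ihy j
      obtain ⟨j2, hj2⟩ := ihx j1
      exact ⟨j2, by rw [mul_smul, hj1, hj2]⟩
    · intro x _ ih j
      have hinj : Function.Injective fun j => (ih j).choose := by
        intro j j' h
        apply hpinj
        have h1 := (ih j).choose_spec
        have h2 := (ih j').choose_spec
        simp only at h
        rw [h] at h1
        exact MulAction.injective x (h1.trans h2.symm)
      obtain ⟨j', hj'⟩ := Finite.injective_iff_surjective.mp hinj j
      refine ⟨j', ?_⟩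
      have hsp := (ih j').choose_spec
      simp only at hj'
      rw [hj'] at hsp
      rw [← hsp, inv_smul_smul]
  -- the permutation attached to each element
  choose σfun hσ using fun (g : Subgroup.closure
      {pgl !![(1:k), 0; 0, -1], pgl !![(0:k), 1; 1, 0], pgl !![(1:k), i; 1, -i]}) j =>
    hsmulp g.1 g.2 j
  have hσinj : ∀ g, Function.Injective (σfun g) := by
    intro g j j' h
    apply hpinj
    have h1 := hσ g j
    have h2 := hσ g j'
    rw [h] at h1
    exact MulAction.injective (g : PGL2 k) (h1.trans h2.symm)
  set φ : Subgroup.closure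
      {pgl !![(1:k), 0; 0, -1], pgl !![(0:k), 1; 1, 0], pgl !![(1:k), i; 1, -i]} →*
      Equiv.Perm (Fin 4) :=
    { toFun := fun g => Equiv.ofBijective (σfun g) (Finite.injective_iff_bijective.mp (hσinj g))
      map_one' := by
        refine Equiv.ext fun j => hpinj ?_
        show pts (σfun 1 j) = pts j
        rw [← hσ 1 j, OneMemClass.coe_one, one_smul]
      map_mul' := fun g h => by
        refine Equiv.ext fun j => hpinj ?_
        show pts (σfun (g * h) j) = pts (σfun g (σfun h j))
        rw [← hσ, ← hσ, ← hσ]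
        exact mul_smul (g : PGL2 k) (h : PGL2 k) (pts j) } with hφdef
  have hφinj : Function.Injective φ := by
    rw [injective_iff_map_eq_one]
    intro g hg
    have hfix : ∀ j, (g : PGL2 k) • pts j = pts j := by
      intro j
      have hj : σfun g j = j := by
        have := Equiv.ext_iff.mp hg j
        simpa [hφdef] using this
      rw [hσ g j, hj]
    have f0 := hfix 0; rw [hp0] at f0
    have f1 := hfix 1; rw [hp1] at f1
    have f2 := hfix 2; rw [hp2] at f2
    have : (g : PGL2 k) = 1 := eq_one_of_fix3 h2 v hv0 hsq1 hsqm1 n0 n1 n2 _ f0 f1 f2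
    exact OneMemClass.coe_eq_one.mp this
  -- values on generators
  have hφa : φ ⟨_, memA⟩ = sA := by
    refine Equiv.ext fun j => hpinj ?_
    show pts (σfun _ j) = pts (sA j)
    rw [← hσ]
    fin_cases j
    · exact hA0.trans (congrArg pts (by decide : sA 0 = (1 : Fin 4)).symm)
    · exact hA1.trans (congrArg pts (by decide : sA 1 = (0 : Fin 4)).symm)
    · exact hA2.trans (congrArg pts (by decide : sA 2 = (3 : Fin 4)).symm)
    · exact hA3.trans (congrArg pts (by decide : sA 3 = (2 : Fin 4)).symm)
  have hφb : φ ⟨_, memB⟩ = sB := by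
    refine Equiv.ext fun j => hpinj ?_
    show pts (σfun _ j) = pts (sB j)
    rw [← hσ]
    fin_cases j
    · exact hB0.trans (congrArg pts (by decide : sB 0 = (2 : Fin 4)).symm)
    · exact hB1.trans (congrArg pts (by decide : sB 1 = (3 : Fin 4)).symm)
    · exact hB2.trans (congrArg pts (by decide : sB 2 = (0 : Fin 4)).symm)
    · exact hB3.trans (congrArg pts (by decide : sB 3 = (1 : Fin 4)).symm)
  have hφc : φ ⟨_, memC⟩ = sC := by
    refine Equiv.ext fun j => hpinj ?_
    show pts (σfun _ j) = pts (sC j)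
    rw [← hσ]
    fin_cases j
    · exact hC0.trans (congrArg pts (by decide : sC 0 = (0 : Fin 4)).symm)
    · exact hC1.trans (congrArg pts (by decide : sC 1 = (2 : Fin 4)).symm)
    · exact hC2.trans (congrArg pts (by decide : sC 2 = (3 : Fin 4)).symm)
    · exact hC3.trans (congrArg pts (by decide : sC 3 = (1 : Fin 4)).symm)
  -- the range of φ is the alternating group
  have hsub : ∀ g, φ g ∈ alternatingGroup (Fin 4) := by
    rintro ⟨g, hg⟩
    refine Subgroup.closure_induction
      (p := fun x hx => φ ⟨x, hx⟩ ∈ alternatingGroup (Fin 4)) ?_ ?_ ?_ ?_ hg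
    · intro x hx
      simp only [Set.mem_insert_iff, Set.mem_singleton_iff] at hx
      rcases hx with rfl | rfl | rfl
      · show φ ⟨_, memA⟩ ∈ _
        rw [hφa, Equiv.Perm.mem_alternatingGroup]; decide
      · show φ ⟨_, memB⟩ ∈ _
        rw [hφb, Equiv.Perm.mem_alternatingGroup]; decide
      · show φ ⟨_, memC⟩ ∈ _
        rw [hφc, Equiv.Perm.mem_alternatingGroup]; decide
    · show φ 1 ∈ _
      rw [_root_.map_one]; exact one_mem _
    · intro x y hx hy ihx ihy
      show φ (⟨x, hx⟩ * ⟨y, hy⟩) ∈ _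
      rw [_root_.map_mul]; exact mul_mem ihx ihy
    · intro x hx ih
      show φ (⟨x, hx⟩⁻¹) ∈ _
      rw [_root_.map_inv]; exact inv_mem ih
  have hrange : φ.range = alternatingGroup (Fin 4) := by
    apply le_antisymm
    · rintro τ ⟨g, rfl⟩
      exact hsub g
    · intro τ hτ
      rw [Equiv.Perm.mem_alternatingGroup] at hτ
      have ra : sA ∈ φ.range := ⟨⟨_, memA⟩, hφa⟩
      have rb : sB ∈ φ.range := ⟨⟨_, memB⟩, hφb⟩
      have rc : sC ∈ φ.range := ⟨⟨_, memC⟩, hφc⟩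
      rcases A4list τ hτ with rfl | rfl | rfl | rfl | rfl | rfl | rfl | rfl | rfl | rfl | rfl | rfl
      exacts [one_mem _, ra, rb, mul_mem ra rb, rc, mul_mem rc rc, mul_mem ra rc,
        mul_mem rb rc, mul_mem (mul_mem ra rb) rc, mul_mem ra (mul_mem rc rc),
        mul_mem rb (mul_mem rc rc), mul_mem (mul_mem ra rb) (mul_mem rc rc)]
  have e := (MonoidHom.ofInjective hφinj).trans (MulEquiv.subgroupCongr hrange)
  refine ⟨⟨e⟩, ?_⟩
  rw [Nat.card_congr e.toEquiv, Nat.card_eq_fintype_card]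
  decide
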